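/- Let λ be a partition of a positive integer n ≥ 4. Then the number of standard Young tableaux T of shape λ having both i and j as descents is the same for all pairs (i,j) with 1 ≤ i < j ≤ n−1 and j − i > 1; that is, #{T : i ∈ D(T) and j ∈ D(T)} depends only on λ and not on such a pair (i,j). -/
import Mathlib


open scoped BigOperators

/-- A standard Young tableau of shape `Y` (a Young diagram with `Y.card = n`):
a bijective filling of the cells of `Y` by the numbers `1, …, n`, strictly increasing
along each row (left to right) and down each column.  Entries outside the
diagram are `0`. -/
structure SYT (Y : YoungDiagram) where
  entry : ℕ → ℕ → ℕ
  bijOn : Set.BijOn (fun c : ℕ × ℕ => entry c.1 c.2) ↑Y.cells (Set.Icc 1 Y.card)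
  row_strict : ∀ ⦃i j1 j2 : ℕ⦄, j1 < j2 → (i, j2) ∈ Y → entry i j1 < entry i j2
  col_strict : ∀ ⦃i1 i2 j : ℕ⦄, i1 < i2 → (i2, j) ∈ Y → entry i1 j < entry i2 j
  zeros : ∀ ⦃i j : ℕ⦄, (i, j) ∉ Y → entry i j = 0

namespace SYT

variable {Y : YoungDiagram}

/-- `i` is a descent of `T` : the entry `i + 1` lies in a strictly lower row
than the entry `i`. -/
def IsDescent (T : SYT Y) (i : ℕ) : Prop :=
  ∃ c ∈ Y.cells, ∃ c' ∈ Y.cells,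
    T.entry c.1 c.2 = i ∧ T.entry c'.1 c'.2 = i + 1 ∧ c.1 < c'.1

open Classical in
/-- The descent set `D(T)` of a standard Young tableau, as a finset.
(Descents necessarily lie in `{1, …, n - 1}` ⊆ `range n`.) -/
noncomputable def descents (T : SYT Y) : Finset ℕ :=
  (Finset.range Y.card).filter fun i => T.IsDescent i

/-- The major index `maj(T) = ∑_{i ∈ D(T)} i`. -/
noncomputable def maj (T : SYT Y) : ℕ :=
  ∑ i ∈ T.descents, i

/-- The descent function `d_f(T) = ∑_{i ∈ D(T)} f(i)`. -/
noncomputable def dfun (f : ℕ → ℝ) (T : SYT Y) : ℝ :=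
  ∑ i ∈ T.descents, f i

end SYT

/-- Expectation of a statistic `g` over uniformly random standard Young tableaux
of shape `Y` : `E_λ[g] = (1/f^λ) ∑_T g(T)`. -/
noncomputable def sytExpect (Y : YoungDiagram) (g : SYT Y → ℝ) : ℝ :=
  (∑ᶠ T : SYT Y, g T) / (Nat.card (SYT Y) : ℝ)

/-- Variance of a statistic `g` : `Var_λ[g] = E_λ[g²] − (E_λ[g])²`. -/
noncomputable def sytVar (Y : YoungDiagram) (g : SYT Y → ℝ) : ℝ :=
  sytExpect Y (fun T => (g T) ^ 2) - (sytExpect Y g) ^ 2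

/-- Probability of an event `P` for a uniformly random standard Young tableau of shape `Y`. -/
noncomputable def sytProb (Y : YoungDiagram) (P : SYT Y → Prop) : ℝ :=
  (Nat.card {T : SYT Y // P T} : ℝ) / (Nat.card (SYT Y) : ℝ)

/-- The constant `c(λ) = [C(n,2) − Σ_i C(λ_i,2) + Σ_j C(λ'_j,2)] / (n(n−1))`.
Rows and columns are 0-indexed; since `Y` has at most `Y.card` nonempty rows and
columns, the sums over `range Y.card` capture all nonzero terms. -/
noncomputable def cpar (Y : YoungDiagram) : ℝ :=
  ((Y.card.choose 2 : ℝ) - ∑ i ∈ Finset.range Y.card, ((Y.rowLen i).choose 2 : ℝ)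
      + ∑ j ∈ Finset.range Y.card, ((Y.colLen j).choose 2 : ℝ))
    / ((Y.card : ℝ) * ((Y.card : ℝ) - 1))

/-- The hook length of the cell `c = (i, j)` (0-indexed):
`h_{ij} = λ_{i+1} + λ'_{j+1} − (i+1) − (j+1) + 1 = rowLen i + colLen j − i − j − 1`. -/
def hookLen (Y : YoungDiagram) (c : ℕ × ℕ) : ℕ :=
  Y.rowLen c.1 + Y.colLen c.2 - c.1 - c.2 - 1


namespace SYT

variable {Y : YoungDiagram}

theorem ext' {T T' : SYT Y} (h : T.entry = T'.entry) : T = T' := by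
  cases T; cases T'; simp_all

theorem entry_mem {T : SYT Y} {c : ℕ × ℕ} (hc : c ∈ Y.cells) :
    T.entry c.1 c.2 ∈ Set.Icc 1 Y.card := T.bijOn.mapsTo hc

theorem exists_cell (T : SYT Y) {v : ℕ} (h1 : 1 ≤ v) (h2 : v ≤ Y.card) :
    ∃ c ∈ Y.cells, T.entry c.1 c.2 = v := by
  obtain ⟨c, hc, hcv⟩ := T.bijOn.surjOn (Set.mem_Icc.2 ⟨h1, h2⟩)
  exact ⟨c, hc, hcv⟩

noncomputable def cell (T : SYT Y) (v : ℕ) : ℕ × ℕ :=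
  if h : ∃ c ∈ Y.cells, T.entry c.1 c.2 = v then h.choose else (0, 0)

theorem cell_spec (T : SYT Y) {v : ℕ} (h1 : 1 ≤ v) (h2 : v ≤ Y.card) :
    T.cell v ∈ Y.cells ∧ T.entry (T.cell v).1 (T.cell v).2 = v := by
  have h := T.exists_cell h1 h2
  rw [cell, dif_pos h]
  exact h.choose_spec

theorem cell_mem (T : SYT Y) {v : ℕ} (h1 : 1 ≤ v) (h2 : v ≤ Y.card) :
    T.cell v ∈ Y.cells := (T.cell_spec h1 h2).1

theorem entry_cell (T : SYT Y) {v : ℕ} (h1 : 1 ≤ v) (h2 : v ≤ Y.card) :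
    T.entry (T.cell v).1 (T.cell v).2 = v := (T.cell_spec h1 h2).2

theorem cell_unique (T : SYT Y) {v : ℕ} {c : ℕ × ℕ} (hc : c ∈ Y.cells)
    (hv : T.entry c.1 c.2 = v) : c = T.cell v := by
  have hmem : v ∈ Set.Icc 1 Y.card := hv ▸ entry_mem hc
  have h1 := hmem.1; have h2 := hmem.2
  apply T.bijOn.injOn hc (T.cell_mem h1 h2)
  simp only [hv, T.entry_cell h1 h2]

theorem isDescent_bounds {T : SYT Y} {i : ℕ} (h : T.IsDescent i) :
    1 ≤ i ∧ i + 1 ≤ Y.card := by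
  obtain ⟨c, hc, c', hc', h1, h2, _⟩ := h
  have m1 := entry_mem (T := T) hc
  have m2 := entry_mem (T := T) hc'
  rw [h1] at m1; rw [h2] at m2
  exact ⟨m1.1, m2.2⟩

theorem isDescent_iff {T : SYT Y} {i : ℕ} (h1 : 1 ≤ i) (h2 : i + 1 ≤ Y.card) :
    T.IsDescent i ↔ (T.cell i).1 < (T.cell (i + 1)).1 := by
  constructor
  · rintro ⟨c, hc, c', hc', hv, hv', hlt⟩
    rw [← T.cell_unique hc hv, ← T.cell_unique hc' hv']
    exact hlt
  · intro hlt
    exact ⟨T.cell i, T.cell_mem h1 (by omega), T.cell (i + 1),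
      T.cell_mem (by omega) h2, T.entry_cell h1 (by omega),
      T.entry_cell (by omega) h2, hlt⟩

end SYT

namespace SYT

variable {Y : YoungDiagram}

theorem swap_lt {u a b : ℕ} (hab : a < b) (h : ¬(a = u ∧ b = u + 1)) :
    Equiv.swap u (u + 1) a < Equiv.swap u (u + 1) b := by
  rw [Equiv.swap_apply_def, Equiv.swap_apply_def]
  split_ifs <;> omega

/-- Validity condition for swapping the entries `u` and `u+1`. -/
def swapValid (T : SYT Y) (u : ℕ) : Prop :=
  1 ≤ u ∧ u + 2 ≤ Y.card + 1 ∧ (T.cell u).1 ≠ (T.cell (u + 1)).1 ∧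
    (T.cell u).2 ≠ (T.cell (u + 1)).2

noncomputable instance (T : SYT Y) (u : ℕ) : Decidable (T.swapValid u) := by
  unfold swapValid; infer_instance

noncomputable def swapVal (T : SYT Y) (u : ℕ) : SYT Y :=
  if h : T.swapValid u then
    { entry := fun i j => Equiv.swap u (u + 1) (T.entry i j)
      bijOn := by
        obtain ⟨h1, h2, -, -⟩ := id h
        have hb : Set.BijOn (Equiv.swap u (u + 1)) (Set.Icc 1 Y.card) (Set.Icc 1 Y.card) := by
          refine ⟨?_, (Equiv.injective _).injOn, ?_⟩
          · intro x hx
            simp only [Set.mem_Icc] at hx ⊢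
            rw [Equiv.swap_apply_def]; split_ifs <;> omega
          · intro y hy
            refine ⟨Equiv.swap u (u + 1) y, ?_, Equiv.swap_apply_self u (u+1) y⟩
            simp only [Set.mem_Icc] at hy ⊢
            rw [Equiv.swap_apply_def]; split_ifs <;> omega
        exact hb.comp T.bijOn
      row_strict := by
        obtain ⟨hu1, hu2, hrne, hcne⟩ := h
        intro i j1 j2 hj hm
        show Equiv.swap u (u+1) (T.entry i j1) < Equiv.swap u (u+1) (T.entry i j2)
        by_cases hm1 : (i, j1) ∈ Y
        · refine swap_lt (T.row_strict hj hm) ?_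
          rintro ⟨e1, e2⟩
          have c1 : (i, j1) = T.cell u := T.cell_unique (by simpa using hm1) e1
          have c2 : (i, j2) = T.cell (u + 1) := T.cell_unique (by simpa using hm) e2
          exact hrne (by rw [← c1, ← c2])
        · rw [T.zeros hm1]
          have h0 : Equiv.swap u (u + 1) 0 = 0 :=
            Equiv.swap_apply_of_ne_of_ne (by omega) (by omega)
          rw [h0]
          have := entry_mem (T := T) (c := (i, j2)) (by simpa using hm)
          rw [Equiv.swap_apply_def]; split_ifs <;> simp at this <;> omega
      col_strict := by
        obtain ⟨hu1, hu2, hrne, hcne⟩ := h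
        intro i1 i2 j hi hm
        show Equiv.swap u (u+1) (T.entry i1 j) < Equiv.swap u (u+1) (T.entry i2 j)
        by_cases hm1 : (i1, j) ∈ Y
        · refine swap_lt (T.col_strict hi hm) ?_
          rintro ⟨e1, e2⟩
          have c1 : (i1, j) = T.cell u := T.cell_unique (by simpa using hm1) e1
          have c2 : (i2, j) = T.cell (u + 1) := T.cell_unique (by simpa using hm) e2
          exact hcne (by rw [← c1, ← c2])
        · rw [T.zeros hm1]
          have h0 : Equiv.swap u (u + 1) 0 = 0 :=
            Equiv.swap_apply_of_ne_of_ne (by omega) (by omega)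
          rw [h0]
          have := entry_mem (T := T) (c := (i2, j)) (by simpa using hm)
          rw [Equiv.swap_apply_def]; split_ifs <;> simp at this <;> omega
      zeros := by
        obtain ⟨hu1, hu2, hrne, hcne⟩ := h
        intro i j hm
        show Equiv.swap u (u+1) (T.entry i j) = 0
        rw [T.zeros hm]
        exact Equiv.swap_apply_of_ne_of_ne (by omega) (by omega) }
  else T

theorem swapVal_entry {T : SYT Y} {u : ℕ} (h : T.swapValid u) :
    (T.swapVal u).entry = fun i j => Equiv.swap u (u + 1) (T.entry i j) := by
  rw [swapVal, dif_pos h]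

theorem cell_swapVal {T : SYT Y} {u : ℕ} (h : T.swapValid u) {v : ℕ}
    (hv1 : 1 ≤ v) (hv2 : v ≤ Y.card) :
    (T.swapVal u).cell v = T.cell (Equiv.swap u (u + 1) v) := by
  obtain ⟨h1, h2, -, -⟩ := id h
  have hsv1 : 1 ≤ Equiv.swap u (u + 1) v := by
    rw [Equiv.swap_apply_def]; split_ifs <;> omega
  have hsv2 : Equiv.swap u (u + 1) v ≤ Y.card := by
    rw [Equiv.swap_apply_def]; split_ifs <;> omega
  refine ((T.swapVal u).cell_unique (T.cell_mem hsv1 hsv2) ?_).symm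
  rw [swapVal_entry h]
  simp only [T.entry_cell hsv1 hsv2, Equiv.swap_apply_self]

theorem swapValid_swapVal {T : SYT Y} {u : ℕ} (h : T.swapValid u) :
    (T.swapVal u).swapValid u := by
  obtain ⟨h1, h2, h3, h4⟩ := h
  have e1 : (T.swapVal u).cell u = T.cell (u + 1) := by
    rw [cell_swapVal ⟨h1, h2, h3, h4⟩ h1 (by omega), Equiv.swap_apply_left]
  have e2 : (T.swapVal u).cell (u + 1) = T.cell u := by
    rw [cell_swapVal ⟨h1, h2, h3, h4⟩ (by omega) (by omega), Equiv.swap_apply_right]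
  exact ⟨h1, h2, by rw [e1, e2]; exact h3.symm, by rw [e1, e2]; exact h4.symm⟩

theorem swapVal_swapVal {T : SYT Y} {u : ℕ} (h : T.swapValid u) :
    (T.swapVal u).swapVal u = T := by
  apply ext'
  rw [swapVal_entry (swapValid_swapVal h), swapVal_entry h]
  funext i j
  simp [Equiv.swap_apply_self]

end SYT

namespace SYT

variable {Y : YoungDiagram}

theorem cellY (T : SYT Y) {v : ℕ} (h1 : 1 ≤ v) (h2 : v ≤ Y.card) :
    ((T.cell v).1, (T.cell v).2) ∈ Y := by
  rw [Prod.mk.eta, ← YoungDiagram.mem_cells]; exact T.cell_mem h1 h2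

/-- If `k+1` sits weakly above `k` but `k+2` is strictly below `k+1`, and `k` is
strictly above `k+2`, then `k+1` and `k+2` are not in the same column. -/
theorem hard1 (T : SYT Y) {k : ℕ} (hk : 1 ≤ k) (hk2 : k + 2 ≤ Y.card)
    (h12 : ¬(T.cell k).1 < (T.cell (k + 1)).1)
    (h23 : (T.cell (k + 1)).1 < (T.cell (k + 2)).1)
    (h13 : (T.cell k).1 < (T.cell (k + 2)).1) :
    (T.cell (k + 1)).2 ≠ (T.cell (k + 2)).2 := by
  intro hcc
  have haY := T.cellY hk (by omega : k ≤ Y.card)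
  have hbY := T.cellY (by omega : 1 ≤ k + 1) (by omega : k + 1 ≤ Y.card)
  have hcY := T.cellY (by omega : 1 ≤ k + 2) hk2
  have hae : T.entry (T.cell k).1 (T.cell k).2 = k := T.entry_cell hk (by omega)
  have hbe : T.entry (T.cell (k + 1)).1 (T.cell (k + 1)).2 = k + 1 :=
    T.entry_cell (by omega) (by omega)
  have hce : T.entry (T.cell (k + 2)).1 (T.cell (k + 2)).2 = k + 2 :=
    T.entry_cell (by omega) (by omega)
  -- Step 1: k+2 is directly below k+1
  have step1 : (T.cell (k + 2)).1 = (T.cell (k + 1)).1 + 1 := by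
    by_contra hne
    have hlt : (T.cell (k + 1)).1 + 1 < (T.cell (k + 2)).1 := by omega
    have hmem : ((T.cell (k + 1)).1 + 1, (T.cell (k + 1)).2) ∈ Y := by
      rw [hcc]; exact Y.up_left_mem (by omega) le_rfl hcY
    have hcY' : ((T.cell (k + 2)).1, (T.cell (k + 1)).2) ∈ Y := by rw [hcc]; exact hcY
    have hce' : T.entry (T.cell (k + 2)).1 (T.cell (k + 1)).2 = k + 2 := by
      rw [hcc]; exact hce
    have e1 := T.col_strict (show (T.cell (k + 1)).1 < (T.cell (k + 1)).1 + 1 by omega) hmem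
    have e2 := T.col_strict hlt hcY'
    rw [hbe] at e1
    rw [hce'] at e2
    omega
  -- Step 2: k and k+1 in the same row
  have step2 : (T.cell k).1 = (T.cell (k + 1)).1 := by omega
  -- Step 3: k strictly left of k+1
  have step3 : (T.cell k).2 < (T.cell (k + 1)).2 := by
    rcases Nat.lt_trichotomy (T.cell k).2 (T.cell (k + 1)).2 with h | h | h
    · exact h
    · exfalso
      have : T.cell k = T.cell (k + 1) := Prod.ext step2 h
      rw [this, hbe] at hae; omega
    · exfalso
      have := T.row_strict h haY
      rw [hae] at this
      rw [step2] at this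
      rw [hbe] at this
      omega
  -- The cell directly left-below: (row of k+2, col of k) ∈ Y with entry k+1
  have hmem5 : ((T.cell (k + 2)).1, (T.cell k).2) ∈ Y :=
    Y.up_left_mem le_rfl (by omega) hcY
  have e5a := T.col_strict h13 hmem5
  rw [hae] at e5a
  have e5b := T.row_strict (show (T.cell k).2 < (T.cell (k + 2)).2 by omega) hcY
  rw [hce] at e5b
  have hmid : T.entry (T.cell (k + 2)).1 (T.cell k).2 = k + 1 := by omega
  have := T.cell_unique (c := ((T.cell (k + 2)).1, (T.cell k).2))
    (by rwa [YoungDiagram.mem_cells]) hmid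
  have hrow : (T.cell (k + 2)).1 = (T.cell (k + 1)).1 := by rw [← this]
  omega

/-- Mirror case: `k` strictly above `k+1`, `k+2` weakly above `k+1`, `k` strictly
above `k+2`: then `k` and `k+1` are not in the same column. -/
theorem hard2 (T : SYT Y) {k : ℕ} (hk : 1 ≤ k) (hk2 : k + 2 ≤ Y.card)
    (h12 : (T.cell k).1 < (T.cell (k + 1)).1)
    (h23 : ¬(T.cell (k + 1)).1 < (T.cell (k + 2)).1)
    (h13 : (T.cell k).1 < (T.cell (k + 2)).1) :
    (T.cell k).2 ≠ (T.cell (k + 1)).2 := by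
  intro hcc
  have haY := T.cellY hk (by omega : k ≤ Y.card)
  have hbY := T.cellY (by omega : 1 ≤ k + 1) (by omega : k + 1 ≤ Y.card)
  have hcY := T.cellY (by omega : 1 ≤ k + 2) hk2
  have hae : T.entry (T.cell k).1 (T.cell k).2 = k := T.entry_cell hk (by omega)
  have hbe : T.entry (T.cell (k + 1)).1 (T.cell (k + 1)).2 = k + 1 :=
    T.entry_cell (by omega) (by omega)
  have hce : T.entry (T.cell (k + 2)).1 (T.cell (k + 2)).2 = k + 2 :=
    T.entry_cell (by omega) (by omega)
  -- Step 1: k+1 directly below k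
  have step1 : (T.cell (k + 1)).1 = (T.cell k).1 + 1 := by
    by_contra hne
    have hlt : (T.cell k).1 + 1 < (T.cell (k + 1)).1 := by omega
    have hmem : ((T.cell k).1 + 1, (T.cell k).2) ∈ Y := by
      rw [hcc]; exact Y.up_left_mem (by omega) le_rfl hbY
    have hbY' : ((T.cell (k + 1)).1, (T.cell k).2) ∈ Y := by rw [hcc]; exact hbY
    have hbe' : T.entry (T.cell (k + 1)).1 (T.cell k).2 = k + 1 := by
      rw [hcc]; exact hbe
    have e1 := T.col_strict (show (T.cell k).1 < (T.cell k).1 + 1 by omega) hmem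
    have e2 := T.col_strict hlt hbY'
    rw [hae] at e1
    rw [hbe'] at e2
    omega
  -- Step 2: k+1 and k+2 in the same row
  have step2 : (T.cell (k + 2)).1 = (T.cell (k + 1)).1 := by omega
  -- Step 3: k+1 strictly left of k+2
  have step3 : (T.cell (k + 1)).2 < (T.cell (k + 2)).2 := by
    rcases Nat.lt_trichotomy (T.cell (k + 1)).2 (T.cell (k + 2)).2 with h | h | h
    · exact h
    · exfalso
      have : T.cell (k + 1) = T.cell (k + 2) := Prod.ext step2.symm h
      rw [this, hce] at hbe; omega
    · exfalso
      have := T.row_strict h hbY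
      rw [hbe] at this
      rw [← step2] at this
      rw [hce] at this
      omega
  -- The cell (row of k, col of k+2) ∈ Y with entry k+1
  have hmem5 : ((T.cell k).1, (T.cell (k + 2)).2) ∈ Y :=
    Y.up_left_mem (by omega) le_rfl hcY
  have e5a := T.row_strict (show (T.cell k).2 < (T.cell (k + 2)).2 by omega) hmem5
  rw [hae] at e5a
  have e5b := T.col_strict h13 hcY
  rw [hce] at e5b
  have hmid : T.entry (T.cell k).1 (T.cell (k + 2)).2 = k + 1 := by omega
  have := T.cell_unique (c := ((T.cell k).1, (T.cell (k + 2)).2))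
    (by rwa [YoungDiagram.mem_cells]) hmid
  have hrow : (T.cell k).1 = (T.cell (k + 1)).1 := by rw [← this]
  omega

end SYT

namespace SYT

variable {Y : YoungDiagram}

theorem swap_eval {u v w : ℕ} (h : (v = u ∧ w = u + 1) ∨ (v = u + 1 ∧ w = u) ∨
    (v ≠ u ∧ v ≠ u + 1 ∧ w = v)) : Equiv.swap u (u + 1) v = w := by
  rw [Equiv.swap_apply_def]; split_ifs <;> omega

/-- The elementary dual-equivalence operator acting on the entries `k, k+1, k+2`. -/
noncomputable def dk (T : SYT Y) (k : ℕ) : SYT Y :=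
  if ¬(T.cell k).1 < (T.cell (k + 1)).1 ∧ (T.cell (k + 1)).1 < (T.cell (k + 2)).1 then
    if (T.cell k).1 < (T.cell (k + 2)).1 then T.swapVal (k + 1) else T.swapVal k
  else if (T.cell k).1 < (T.cell (k + 1)).1 ∧ ¬(T.cell (k + 1)).1 < (T.cell (k + 2)).1 then
    if (T.cell k).1 < (T.cell (k + 2)).1 then T.swapVal k else T.swapVal (k + 1)
  else T

theorem dk_def (T : SYT Y) (k : ℕ) : T.dk k =
    if ¬(T.cell k).1 < (T.cell (k + 1)).1 ∧ (T.cell (k + 1)).1 < (T.cell (k + 2)).1 then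
      if (T.cell k).1 < (T.cell (k + 2)).1 then T.swapVal (k + 1) else T.swapVal k
    else if (T.cell k).1 < (T.cell (k + 1)).1 ∧ ¬(T.cell (k + 1)).1 < (T.cell (k + 2)).1 then
      if (T.cell k).1 < (T.cell (k + 2)).1 then T.swapVal k else T.swapVal (k + 1)
    else T := rfl

/-- Cells of `T.swapVal k` on the window and far away. -/
theorem cells_swapk {T : SYT Y} {k : ℕ} (h : T.swapValid k) (hk2 : k + 2 ≤ Y.card) :
    (T.swapVal k).cell k = T.cell (k + 1) ∧ (T.swapVal k).cell (k + 1) = T.cell k ∧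
    (T.swapVal k).cell (k + 2) = T.cell (k + 2) ∧
    ∀ v, 1 ≤ v → v ≤ Y.card → v ≠ k → v ≠ k + 1 → (T.swapVal k).cell v = T.cell v := by
  obtain ⟨h1, h2, -, -⟩ := id h
  refine ⟨?_, ?_, ?_, ?_⟩
  · rw [cell_swapVal h h1 (by omega)]
    · congr 1
      exact swap_eval (by omega)
  · rw [cell_swapVal h (by omega) (by omega)]
    · congr 1
      exact swap_eval (by omega)
  · rw [cell_swapVal h (by omega) (by omega)]
    · congr 1
      exact swap_eval (by omega)
  · intro v hv1 hv2 hv3 hv4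
    rw [cell_swapVal h hv1 hv2]
    · congr 1
      exact swap_eval (by omega)

theorem cells_swapk1 {T : SYT Y} {k : ℕ} (h : T.swapValid (k + 1)) (hk : 1 ≤ k)
    (hk2 : k + 2 ≤ Y.card) :
    (T.swapVal (k + 1)).cell k = T.cell k ∧
    (T.swapVal (k + 1)).cell (k + 1) = T.cell (k + 2) ∧
    (T.swapVal (k + 1)).cell (k + 2) = T.cell (k + 1) ∧
    ∀ v, 1 ≤ v → v ≤ Y.card → v ≠ k + 1 → v ≠ k + 2 →
      (T.swapVal (k + 1)).cell v = T.cell v := by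
  refine ⟨?_, ?_, ?_, ?_⟩
  · rw [cell_swapVal h hk (by omega)]
    · congr 1
      exact swap_eval (by omega)
  · rw [cell_swapVal h (by omega) (by omega)]
    · congr 1
      exact swap_eval (by omega)
  · rw [cell_swapVal h (by omega) (by omega)]
    · congr 1
      exact swap_eval (by omega)
  · intro v hv1 hv2 hv3 hv4
    rw [cell_swapVal h hv1 hv2]
    · congr 1
      exact swap_eval (by omega)

theorem dk_spec (T : SYT Y) {k : ℕ} (hk : 1 ≤ k) (hk2 : k + 2 ≤ Y.card) :
    (∀ v, 1 ≤ v → v ≤ Y.card → v ≠ k → v ≠ k + 1 → v ≠ k + 2 →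
      (T.dk k).cell v = T.cell v) ∧
    (((T.dk k).cell k).1 < ((T.dk k).cell (k + 1)).1 ↔
      (T.cell (k + 1)).1 < (T.cell (k + 2)).1) ∧
    (((T.dk k).cell (k + 1)).1 < ((T.dk k).cell (k + 2)).1 ↔
      (T.cell k).1 < (T.cell (k + 1)).1) ∧
    (T.dk k).dk k = T := by
  by_cases h12 : (T.cell k).1 < (T.cell (k + 1)).1
  · by_cases h23 : (T.cell (k + 1)).1 < (T.cell (k + 2)).1
    · -- pattern 11 : identity
      have hdk : T.dk k = T := by
        rw [dk_def, if_neg (fun hc => hc.1 h12), if_neg (fun hc => hc.2 h23)]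
      rw [hdk]
      exact ⟨fun v _ _ _ _ _ => rfl, by omega, by omega, by
        rw [dk_def, if_neg (fun hc => hc.1 h12), if_neg (fun hc => hc.2 h23)]⟩
    · by_cases h13 : (T.cell k).1 < (T.cell (k + 2)).1
      · -- pattern 10, case r1 < r3 : swap k ↔ k+1
        have hval : T.swapValid k :=
          ⟨hk, by omega, by omega, T.hard2 hk hk2 h12 h23 h13⟩
        have hdk : T.dk k = T.swapVal k := by
          rw [dk_def, if_neg (fun hc => hc.1 h12), if_pos ⟨h12, h23⟩, if_pos h13]
        obtain ⟨ck, ck1, ck2, cfar⟩ := cells_swapk hval hk2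
        rw [hdk]
        refine ⟨fun v hv1 hv2 hv3 hv4 _ => cfar v hv1 hv2 hv3 hv4, ?_, ?_, ?_⟩
        · rw [ck, ck1]; omega
        · rw [ck1, ck2]; omega
        · rw [dk_def, ck, ck1, ck2]
          rw [if_pos ⟨by omega, by omega⟩, if_neg (by omega)]
          exact swapVal_swapVal hval
      · -- pattern 10, case r3 ≤ r1 : swap k+1 ↔ k+2
        have hval : T.swapValid (k + 1) := by
          refine ⟨by omega, by omega,
            (by omega : (T.cell (k + 1)).1 ≠ (T.cell (k + 2)).1), ?_⟩
          show (T.cell (k + 1)).2 ≠ (T.cell (k + 2)).2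
          intro hcc
          have hbY := T.cellY (by omega : 1 ≤ k + 1) (by omega : k + 1 ≤ Y.card)
          have hbe : T.entry (T.cell (k + 1)).1 (T.cell (k + 1)).2 = k + 1 :=
            T.entry_cell (by omega) (by omega)
          have hce : T.entry (T.cell (k + 2)).1 (T.cell (k + 2)).2 = k + 2 :=
            T.entry_cell (by omega) (by omega)
          have := T.col_strict (show (T.cell (k + 2)).1 < (T.cell (k + 1)).1 by omega) hbY
          rw [hbe] at this
          rw [hcc] at this
          rw [hce] at this
          omega
        have hdk : T.dk k = T.swapVal (k + 1) := by
          rw [dk_def, if_neg (fun hc => hc.1 h12), if_pos ⟨h12, h23⟩, if_neg h13]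
        obtain ⟨ck, ck1, ck2, cfar⟩ := cells_swapk1 hval hk hk2
        rw [hdk]
        refine ⟨fun v hv1 hv2 _ hv4 hv5 => cfar v hv1 hv2 hv4 hv5, ?_, ?_, ?_⟩
        · rw [ck, ck1]; omega
        · rw [ck1, ck2]; omega
        · rw [dk_def, ck, ck1, ck2]
          rw [if_pos ⟨by omega, by omega⟩, if_pos (by omega)]
          exact swapVal_swapVal hval
  · by_cases h23 : (T.cell (k + 1)).1 < (T.cell (k + 2)).1
    · by_cases h13 : (T.cell k).1 < (T.cell (k + 2)).1
      · -- pattern 01, case r1 < r3 : swap k+1 ↔ k+2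
        have hval : T.swapValid (k + 1) :=
          ⟨by omega, by omega, (by omega : (T.cell (k + 1)).1 ≠ (T.cell (k + 2)).1),
            T.hard1 hk hk2 h12 h23 h13⟩
        have hdk : T.dk k = T.swapVal (k + 1) := by
          rw [dk_def, if_pos ⟨h12, h23⟩, if_pos h13]
        obtain ⟨ck, ck1, ck2, cfar⟩ := cells_swapk1 hval hk hk2
        rw [hdk]
        refine ⟨fun v hv1 hv2 _ hv4 hv5 => cfar v hv1 hv2 hv4 hv5, ?_, ?_, ?_⟩
        · rw [ck, ck1]; omega
        · rw [ck1, ck2]; omega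
        · rw [dk_def, ck, ck1, ck2]
          rw [if_neg (fun hc => hc.1 h13), if_pos ⟨h13, by omega⟩, if_neg (by omega)]
          exact swapVal_swapVal hval
      · -- pattern 01, case r3 ≤ r1 : swap k ↔ k+1
        have hval : T.swapValid k := by
          refine ⟨hk, by omega, by omega, ?_⟩
          intro hcc
          have haY := T.cellY hk (by omega : k ≤ Y.card)
          have hae : T.entry (T.cell k).1 (T.cell k).2 = k := T.entry_cell hk (by omega)
          have hbe : T.entry (T.cell (k + 1)).1 (T.cell (k + 1)).2 = k + 1 :=
            T.entry_cell (by omega) (by omega)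
          have := T.col_strict (show (T.cell (k + 1)).1 < (T.cell k).1 by omega) haY
          rw [hae] at this
          rw [hcc] at this
          rw [hbe] at this
          omega
        have hdk : T.dk k = T.swapVal k := by
          rw [dk_def, if_pos ⟨h12, h23⟩, if_neg h13]
        obtain ⟨ck, ck1, ck2, cfar⟩ := cells_swapk hval hk2
        rw [hdk]
        refine ⟨fun v hv1 hv2 hv3 hv4 _ => cfar v hv1 hv2 hv3 hv4, ?_, ?_, ?_⟩
        · rw [ck, ck1]; omega
        · rw [ck1, ck2]; omega
        · rw [dk_def, ck, ck1, ck2]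
          rw [if_neg (by omega), if_pos ⟨by omega, by omega⟩, if_pos (by omega)]
          exact swapVal_swapVal hval
    · -- pattern 00 : identity
      have hdk : T.dk k = T := by
        rw [dk_def, if_neg (fun hc => h23 hc.2), if_neg (fun hc => h12 hc.1)]
      rw [hdk]
      exact ⟨fun v _ _ _ _ _ => rfl, by omega, by omega, by
        rw [dk_def, if_neg (fun hc => h23 hc.2), if_neg (fun hc => h12 hc.1)]⟩

end SYT

namespace SYT

variable {Y : YoungDiagram}

theorem isDescent_dk_far {T : SYT Y} {k m : ℕ} (hk : 1 ≤ k) (hk2 : k + 2 ≤ Y.card)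
    (hm : m + 2 ≤ k ∨ k + 3 ≤ m) : (T.dk k).IsDescent m ↔ T.IsDescent m := by
  obtain ⟨cfar, -, -, -⟩ := T.dk_spec hk hk2
  constructor
  · intro h
    obtain ⟨hm1, hm2⟩ := isDescent_bounds h
    have e1 := cfar m hm1 (by omega) (by omega) (by omega) (by omega)
    have e2 := cfar (m + 1) (by omega) hm2 (by omega) (by omega) (by omega)
    rw [isDescent_iff hm1 hm2] at h ⊢
    rwa [e1, e2] at h
  · intro h
    obtain ⟨hm1, hm2⟩ := isDescent_bounds h
    have e1 := cfar m hm1 (by omega) (by omega) (by omega) (by omega)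
    have e2 := cfar (m + 1) (by omega) hm2 (by omega) (by omega) (by omega)
    rw [isDescent_iff hm1 hm2] at h ⊢
    rwa [e1, e2]

theorem isDescent_dk_left {T : SYT Y} {k : ℕ} (hk : 1 ≤ k) (hk2 : k + 2 ≤ Y.card) :
    (T.dk k).IsDescent k ↔ T.IsDescent (k + 1) := by
  obtain ⟨-, hiff, -, -⟩ := T.dk_spec hk hk2
  rw [isDescent_iff hk (by omega), isDescent_iff (by omega) (by omega : k + 1 + 1 ≤ Y.card),
    hiff]

theorem isDescent_dk_right {T : SYT Y} {k : ℕ} (hk : 1 ≤ k) (hk2 : k + 2 ≤ Y.card) :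
    (T.dk k).IsDescent (k + 1) ↔ T.IsDescent k := by
  obtain ⟨-, -, hiff, -⟩ := T.dk_spec hk hk2
  rw [isDescent_iff hk (by omega), isDescent_iff (by omega) (by omega : k + 1 + 1 ≤ Y.card),
    hiff]

theorem card_step (m k : ℕ) (hk : 1 ≤ k) (hk2 : k + 2 ≤ Y.card)
    (hm : m + 2 ≤ k ∨ k + 3 ≤ m) :
    Nat.card {T : SYT Y // T.IsDescent m ∧ T.IsDescent k} =
      Nat.card {T : SYT Y // T.IsDescent m ∧ T.IsDescent (k + 1)} := by
  apply Nat.card_congr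
  refine ⟨fun p => ⟨p.1.dk k, (isDescent_dk_far hk hk2 hm).2 p.2.1,
      (isDescent_dk_right hk hk2).2 p.2.2⟩,
    fun p => ⟨p.1.dk k, (isDescent_dk_far hk hk2 hm).2 p.2.1,
      (isDescent_dk_left hk hk2).2 p.2.2⟩, ?_, ?_⟩
  · intro p
    exact Subtype.ext (p.1.dk_spec hk hk2).2.2.2
  · intro p
    exact Subtype.ext (p.1.dk_spec hk hk2).2.2.2

theorem card_comm (P Q : SYT Y → Prop) :
    Nat.card {T : SYT Y // P T ∧ Q T} = Nat.card {T : SYT Y // Q T ∧ P T} :=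
  Nat.card_congr (Equiv.subtypeEquivRight fun _ => and_comm)

theorem chainA : ∀ i j : ℕ, 1 ≤ i → i + 2 ≤ j → j + 1 ≤ Y.card →
    Nat.card {T : SYT Y // T.IsDescent i ∧ T.IsDescent j} =
      Nat.card {T : SYT Y // T.IsDescent 1 ∧ T.IsDescent j} := by
  intro i
  induction i with
  | zero => intro j h1 h2 h3; omega
  | succ i ih =>
    intro j h1 h2 h3
    rcases Nat.eq_zero_or_pos i with h0 | hpos
    · subst h0; rfl
    calc Nat.card {T : SYT Y // T.IsDescent (i + 1) ∧ T.IsDescent j}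
        = Nat.card {T : SYT Y // T.IsDescent j ∧ T.IsDescent (i + 1)} :=
          card_comm (fun T => T.IsDescent (i + 1)) (fun T => T.IsDescent j)
      _ = Nat.card {T : SYT Y // T.IsDescent j ∧ T.IsDescent i} :=
          (card_step j i hpos (by omega) (Or.inr (by omega))).symm
      _ = Nat.card {T : SYT Y // T.IsDescent i ∧ T.IsDescent j} :=
          card_comm (fun T => T.IsDescent j) (fun T => T.IsDescent i)
      _ = Nat.card {T : SYT Y // T.IsDescent 1 ∧ T.IsDescent j} :=
          ih j hpos (by omega) h3

theorem chainB : ∀ d j : ℕ, 3 ≤ j → j + 1 ≤ Y.card → Y.card - (j + 1) = d →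
    Nat.card {T : SYT Y // T.IsDescent 1 ∧ T.IsDescent j} =
      Nat.card {T : SYT Y // T.IsDescent 1 ∧ T.IsDescent (Y.card - 1)} := by
  intro d
  induction d with
  | zero =>
    intro j h1 h2 h3
    have hj : j = Y.card - 1 := by omega
    rw [hj]
  | succ d ih =>
    intro j h1 h2 h3
    calc Nat.card {T : SYT Y // T.IsDescent 1 ∧ T.IsDescent j}
        = Nat.card {T : SYT Y // T.IsDescent 1 ∧ T.IsDescent (j + 1)} :=
          card_step 1 j (by omega) (by omega) (Or.inl (by omega))
      _ = Nat.card {T : SYT Y // T.IsDescent 1 ∧ T.IsDescent (Y.card - 1)} :=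
          ih (j + 1) (by omega) (by omega) (by omega)

theorem card_pair (i j : ℕ) (hi : 1 ≤ i) (hij : i + 2 ≤ j) (hj : j + 1 ≤ Y.card) :
    Nat.card {T : SYT Y // T.IsDescent i ∧ T.IsDescent j} =
      Nat.card {T : SYT Y // T.IsDescent 1 ∧ T.IsDescent (Y.card - 1)} :=
  (chainA i j hi hij hj).trans (chainB (Y.card - (j + 1)) j (by omega) hj rfl)

end SYT


/-- For a partition `λ` of `n ≥ 4`, the number of standard Young
tableaux of shape `λ` having both `i` and `j` as descents is the same for all pairs
`(i, j)` with `1 ≤ i < j ≤ n − 1` and `j − i > 1`. -/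
theorem count_separated_descents_indep (n : ℕ) (hn : 4 ≤ n) (Y : YoungDiagram)
    (hY : Y.card = n) (i₁ j₁ i₂ j₂ : ℕ)
    (hi₁ : 1 ≤ i₁) (hij₁ : i₁ < j₁) (hj₁ : j₁ ≤ n - 1) (hsep₁ : 1 < j₁ - i₁)
    (hi₂ : 1 ≤ i₂) (hij₂ : i₂ < j₂) (hj₂ : j₂ ≤ n - 1) (hsep₂ : 1 < j₂ - i₂) :
    Nat.card {T : SYT Y // T.IsDescent i₁ ∧ T.IsDescent j₁} =
      Nat.card {T : SYT Y // T.IsDescent i₂ ∧ T.IsDescent j₂} := by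
  rw [SYT.card_pair i₁ j₁ hi₁ (by omega) (by omega),
    SYT.card_pair i₂ j₂ hi₂ (by omega) (by omega)]
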